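/- Let M ⊂ ℝ^D be a compact d-dimensional submanifold with 0 < H^d(M) < ∞, let B ⊂ ℝ^D be a Borel set, and let Φ : ℝ^D → ℝ^D be a global diffeomorphism such that Φ restricted to the complement of B is the identity map and sup_x ‖d_xΦ − I_D‖_op ≤ 2^{1/d} − 1. Then H^d(Φ(M)) ≤ 2 H^d(M) and TV(λ_M, λ_{Φ(M)}) ≤ 12 λ_M(B). -/

import Mathlib

open Metric Set ENNReal MeasureTheory

noncomputable section

abbrev Euc (D : ℕ) := EuclideanSpace ℝ (Fin D)

variable {D : ℕ}

/-- `M ⊆ ℝ^D` is a `C^k` embedded `d`-dimensional submanifold without boundary. -/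
def IsSubmanifold (k d : ℕ) (M : Set (Euc D)) : Prop :=
  ∀ x ∈ M, ∃ (u : Set (Euc d)) (v : Set (Euc D)) (ψ : Euc d → Euc D) (φ : Euc D → Euc d),
    IsOpen u ∧ IsOpen v ∧ x ∈ v ∧ ContDiffOn ℝ k ψ u ∧
    (∀ y ∈ u, Function.Injective (fderiv ℝ ψ y)) ∧
    Set.BijOn ψ u (M ∩ v) ∧ ContinuousOn φ (M ∩ v) ∧ ∀ y ∈ u, φ (ψ y) = y

/-- The total variation distance between two measures:
`TV(P, P') = sup_{A measurable} |P(A) - P'(A)|`. -/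
def tvDist {Ω : Type*} [MeasurableSpace Ω] (P P' : Measure Ω) : ℝ :=
  ⨆ s : {s : Set Ω // MeasurableSet s}, |(P s.1).toReal - (P' s.1).toReal|

/-- The uniform probability distribution `λ_S = H^d(· ∩ S) / H^d(S)` on a set `S ⊆ ℝ^D`. -/
def uniformOn (d : ℕ) (S : Set (Euc D)) : Measure (Euc D) :=
  (μH[(d : ℝ)] S)⁻¹ • μH[(d : ℝ)].restrict S

/-- Lemma `total_variation_between_uniforms`.
Let `M ⊂ ℝ^D` be a compact `d`-dimensional submanifold with `0 < H^d(M) < ∞`, `B` a Borel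
set, and `Φ : ℝ^D → ℝ^D` a global diffeomorphism equal to the identity outside `B` with
`‖dΦ - I_D‖_op ≤ 2^{1/d} - 1` everywhere. Then `H^d(Φ(M)) ≤ 2 H^d(M)` and
`TV(λ_M, λ_{Φ(M)}) ≤ 12 λ_M(B)`. -/
lemma real_key (a a' c rb rb' rc : ℝ)
    (hrb : 0 ≤ rb) (hrc : 0 ≤ rc)
    (ha0 : 0 ≤ a) (ha : a ≤ rb) (ha'0 : 0 ≤ a') (ha' : a' ≤ rb')
    (hc0 : 0 ≤ c) (hc : c ≤ rc)
    (hb' : rb' ≤ 2 * rb) (hm : 0 < rb + rc) (hm' : 0 < rb' + rc) :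
    |(a + c) / (rb + rc) - (a' + c) / (rb' + rc)| ≤ 12 * (rb / (rb + rc)) := by
  have hX : |(a + c) * (rb' + rc) - (a' + c) * (rb + rc)| ≤ 3 * rb * (rb' + rc) := by
    rw [abs_le]
    constructor
    · nlinarith [mul_nonneg ha'0 hrc, mul_nonneg hc0 hrb, mul_nonneg hrb hrc,
        mul_le_mul_of_nonneg_right ha (le_of_lt hm'), mul_nonneg ha0 hrc,
        mul_le_mul_of_nonneg_left hb' (add_nonneg ha'0 hc0),
        mul_le_mul_of_nonneg_right hb' hrc]
    · nlinarith [mul_nonneg ha'0 hrc, mul_nonneg hc0 hrb, mul_nonneg hrb hrc,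
        mul_le_mul_of_nonneg_right ha' (le_of_lt hm), mul_nonneg ha0 hrc,
        mul_le_mul_of_nonneg_left hb' (add_nonneg ha'0 hc0),
        mul_le_mul_of_nonneg_right hb' hrc,
        mul_le_mul_of_nonneg_right hb' hrc, mul_le_mul hc le_rfl hrb hrc,
        mul_le_mul ha' hc hc0 (le_trans ha'0 ha')]
  rw [div_sub_div _ _ hm.ne' hm'.ne', abs_div, abs_of_pos (mul_pos hm hm')]
  rw [div_le_iff₀ (mul_pos hm hm')]
  calc |(a + c) * (rb' + rc) - (rb + rc) * (a' + c)|
      ≤ 3 * rb * (rb' + rc) := by rw [mul_comm (rb+rc)]; exact hX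
    _ ≤ 12 * (rb / (rb + rc)) * ((rb + rc) * (rb' + rc)) := by
        have h12 : 12 * (rb / (rb + rc)) * ((rb + rc) * (rb' + rc))
            = 12 * rb * (rb' + rc) := by
          field_simp
        rw [h12]
        nlinarith [mul_nonneg hrb (le_of_lt hm')]

theorem tv_uniform_of_diffeo (d : ℕ) (hd : 0 < d) (M B : Set (Euc D))
    (hM : IsSubmanifold 1 d M) (hMc : IsCompact M)
    (hpos : 0 < μH[(d : ℝ)] M) (hfin : μH[(d : ℝ)] M < ⊤)
    (hB : MeasurableSet B)
    (Φ Ψ : Euc D → Euc D) (hΦ : ContDiff ℝ 1 Φ) (hΨ : ContDiff ℝ 1 Ψ)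
    (hlinv : Function.LeftInverse Ψ Φ) (hrinv : Function.RightInverse Ψ Φ)
    (hid : ∀ x ∉ B, Φ x = x)
    (hder : ∀ x, ‖fderiv ℝ Φ x - ContinuousLinearMap.id ℝ (Euc D)‖ ≤
      (2 : ℝ) ^ ((d : ℝ)⁻¹) - 1) :
    μH[(d : ℝ)] (Φ '' M) ≤ 2 * μH[(d : ℝ)] M ∧
    tvDist (uniformOn d M) (uniformOn d (Φ '' M)) ≤ 12 * (uniformOn d M B).toReal := by
  have hd0 : (0 : ℝ) ≤ (d : ℝ) := Nat.cast_nonneg d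
  have hdne : (d : ℝ) ≠ 0 := Nat.cast_ne_zero.mpr hd.ne'
  have htwo : (1 : ℝ) ≤ (2 : ℝ) ^ ((d : ℝ)⁻¹) :=
    Real.one_le_rpow one_le_two (by positivity)
  set K : NNReal := Real.toNNReal ((2 : ℝ) ^ ((d : ℝ)⁻¹)) with hKdef
  have hKcoe : (K : ℝ) = (2 : ℝ) ^ ((d : ℝ)⁻¹) :=
    Real.coe_toNNReal _ (by positivity)
  -- Φ is K-Lipschitz
  have hK : ∀ x, ‖fderiv ℝ Φ x‖₊ ≤ K := by
    intro x
    rw [← NNReal.coe_le_coe, coe_nnnorm, hKcoe]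
    have h1 := hder x
    have h2 : ‖fderiv ℝ Φ x‖ - ‖ContinuousLinearMap.id ℝ (Euc D)‖ ≤
        ‖fderiv ℝ Φ x - ContinuousLinearMap.id ℝ (Euc D)‖ := norm_sub_norm_le _ _
    have h3 : ‖ContinuousLinearMap.id ℝ (Euc D)‖ ≤ 1 := ContinuousLinearMap.norm_id_le
    linarith
  have hlip : LipschitzWith K Φ :=
    lipschitzWith_of_nnnorm_fderiv_le (hΦ.differentiable one_ne_zero) hK
  have hKd : ((K : ℝ≥0∞)) ^ (d : ℝ) = 2 := by
    have hKne : K ≠ 0 := by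
      rw [← NNReal.coe_ne_zero, hKcoe]; positivity
    rw [← ENNReal.coe_rpow_of_ne_zero hKne]
    have : K ^ (d : ℝ) = 2 := by
      ext
      rw [NNReal.coe_rpow, hKcoe, ← Real.rpow_mul (by norm_num : (0:ℝ) ≤ 2),
        inv_mul_cancel₀ hdne, Real.rpow_one]
      norm_num
    rw [this]; norm_num
  have part1gen : ∀ s : Set (Euc D), μH[(d : ℝ)] (Φ '' s) ≤ 2 * μH[(d : ℝ)] s := by
    intro s
    calc μH[(d : ℝ)] (Φ '' s) ≤ (K : ℝ≥0∞) ^ (d : ℝ) * μH[(d : ℝ)] s :=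
          hlip.hausdorffMeasure_image_le hd0 s
      _ = 2 * μH[(d : ℝ)] s := by rw [hKd]
  have part1 := part1gen M
  refine ⟨part1, ?_⟩
  -- set facts
  have hinj : Function.Injective Φ := hlinv.injective
  have hΦB : ∀ x ∈ B, Φ x ∈ B := by
    intro x hx
    by_contra h
    have h1 : Φ (Φ x) = Φ x := hid _ h
    have h2 : Φ x = x := hinj h1
    rw [h2] at h; exact h hx
  have hMB' : Φ '' M ∩ B = Φ '' (M ∩ B) := by
    ext y; constructor
    · rintro ⟨⟨x, hxM, rfl⟩, hyB⟩
      by_cases hxB : x ∈ B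
      · exact ⟨x, ⟨hxM, hxB⟩, rfl⟩
      · rw [hid _ hxB] at hyB; exact absurd hyB hxB
    · rintro ⟨x, ⟨hxM, hxB⟩, rfl⟩
      exact ⟨⟨x, hxM, rfl⟩, hΦB _ hxB⟩
  have hMdB : Φ '' M \ B = M \ B := by
    ext y; constructor
    · rintro ⟨⟨x, hxM, rfl⟩, hyB⟩
      by_cases hxB : x ∈ B
      · exact absurd (hΦB _ hxB) hyB
      · rw [hid _ hxB]; exact ⟨hxM, hxB⟩
    · rintro ⟨hyM, hyB⟩
      exact ⟨⟨y, hyM, hid _ hyB⟩, hyB⟩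
  set μ : Measure (Euc D) := μH[(d : ℝ)] with hμdef
  set m : ℝ≥0∞ := μ M with hmdef
  set m' : ℝ≥0∞ := μ (Φ '' M) with hm'def
  set b : ℝ≥0∞ := μ (M ∩ B) with hbdef
  set b' : ℝ≥0∞ := μ (Φ '' M ∩ B) with hb'def
  set e : ℝ≥0∞ := μ (M \ B) with hedef
  have hbe : b + e = m := measure_inter_add_diff M hB
  have hbe' : b' + e = m' := by
    have := measure_inter_add_diff (μ := μ) (Φ '' M) hB
    rwa [hMdB] at this
  have hb'2b : b' ≤ 2 * b := by
    rw [hb'def, hMB']; exact part1gen _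
  -- finiteness
  have hmne : m ≠ ⊤ := hfin.ne
  have hm'ne : m' ≠ ⊤ := by
    refine ne_top_of_le_ne_top ?_ part1
    exact ENNReal.mul_ne_top (by norm_num) hmne
  have hbne : b ≠ ⊤ := ne_top_of_le_ne_top hmne (measure_mono inter_subset_left)
  have hb'ne : b' ≠ ⊤ := ne_top_of_le_ne_top hm'ne (measure_mono inter_subset_left)
  have hene : e ≠ ⊤ := ne_top_of_le_ne_top hmne (measure_mono diff_subset)
  -- RHS value
  have hRHS : (uniformOn d M B).toReal = b.toReal / m.toReal := by
    rw [uniformOn, Measure.smul_apply, smul_eq_mul, Measure.restrict_apply hB,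
      Set.inter_comm, ENNReal.toReal_mul, ENNReal.toReal_inv, ← hmdef, ← hbdef]
    rw [inv_mul_eq_div]
  rw [hRHS]
  have hmpos : 0 < m.toReal := ENNReal.toReal_pos hpos.ne' hmne
  by_cases hm'0 : m' = 0
  · -- degenerate case: image has measure zero
    have he0 : e = 0 := by
      have := hbe'
      rw [hm'0, add_eq_zero] at this
      exact this.2
    have hbm : b = m := by rw [← hbe, he0, add_zero]
    have hRHSval : b.toReal / m.toReal = 1 := by
      rw [hbm]; exact div_self hmpos.ne'
    rw [hRHSval]
    apply Real.iSup_le _ (by norm_num)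
    rintro ⟨s, hs⟩
    have hP' : uniformOn d (Φ '' M) s = 0 := by
      rw [uniformOn, Measure.smul_apply, smul_eq_mul, Measure.restrict_apply hs]
      have : μ (s ∩ Φ '' M) = 0 :=
        le_antisymm (le_trans (measure_mono inter_subset_right) hm'0.le) zero_le
      rw [this, mul_zero]
    have hP : uniformOn d M s ≤ 1 := by
      rw [uniformOn, Measure.smul_apply, smul_eq_mul, Measure.restrict_apply hs]
      calc m⁻¹ * μ (s ∩ M) ≤ m⁻¹ * m :=
            mul_le_mul_right (measure_mono inter_subset_right) _
        _ = 1 := ENNReal.inv_mul_cancel hpos.ne' hmne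
    have hPr : (uniformOn d M s).toReal ≤ 1 := by
      have := ENNReal.toReal_mono (by norm_num) hP
      simpa using this
    rw [hP', ENNReal.toReal_zero, sub_zero, abs_of_nonneg ENNReal.toReal_nonneg]
    linarith
  · -- main case
    have hm'pos : 0 < m'.toReal := ENNReal.toReal_pos hm'0 hm'ne
    have hrm : m.toReal = b.toReal + e.toReal := by
      rw [← hbe, ENNReal.toReal_add hbne hene]
    have hrm' : m'.toReal = b'.toReal + e.toReal := by
      rw [← hbe', ENNReal.toReal_add hb'ne hene]
    have hrb' : b'.toReal ≤ 2 * b.toReal := by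
      have := ENNReal.toReal_mono (ENNReal.mul_ne_top (by norm_num) hbne) hb'2b
      rwa [ENNReal.toReal_mul, ENNReal.toReal_ofNat] at this
    apply Real.iSup_le _ (by positivity)
    rintro ⟨s, hs⟩
    -- decompose measures
    have h1 : μ (s ∩ M ∩ B) + μ (s ∩ (M \ B)) = μ (s ∩ M) := by
      have := measure_inter_add_diff (μ := μ) (s ∩ M) hB
      rwa [inter_diff_assoc] at this
    have h2 : μ (s ∩ Φ '' M ∩ B) + μ (s ∩ (M \ B)) = μ (s ∩ Φ '' M) := by
      have := measure_inter_add_diff (μ := μ) (s ∩ Φ '' M) hB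
      rwa [inter_diff_assoc, hMdB] at this
    have hane : μ (s ∩ M ∩ B) ≠ ⊤ :=
      ne_top_of_le_ne_top hbne (measure_mono (inter_subset_inter_left _ inter_subset_right))
    have ha'ne : μ (s ∩ Φ '' M ∩ B) ≠ ⊤ :=
      ne_top_of_le_ne_top hb'ne (measure_mono (inter_subset_inter_left _ inter_subset_right))
    have hcne : μ (s ∩ (M \ B)) ≠ ⊤ :=
      ne_top_of_le_ne_top hene (measure_mono inter_subset_right)
    have hPval : (uniformOn d M s).toReal
        = ((μ (s ∩ M ∩ B)).toReal + (μ (s ∩ (M \ B))).toReal) / m.toReal := by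
      rw [uniformOn, Measure.smul_apply, smul_eq_mul, Measure.restrict_apply hs,
        ENNReal.toReal_mul, ENNReal.toReal_inv, ← hmdef, inv_mul_eq_div, ← h1,
        ENNReal.toReal_add hane hcne]
    have hP'val : (uniformOn d (Φ '' M) s).toReal
        = ((μ (s ∩ Φ '' M ∩ B)).toReal + (μ (s ∩ (M \ B))).toReal) / m'.toReal := by
      rw [uniformOn, Measure.smul_apply, smul_eq_mul, Measure.restrict_apply hs,
        ENNReal.toReal_mul, ENNReal.toReal_inv, ← hm'def, inv_mul_eq_div, ← h2,
        ENNReal.toReal_add ha'ne hcne]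
    rw [hPval, hP'val, hrm, hrm']
    apply real_key
    · exact ENNReal.toReal_nonneg
    · exact ENNReal.toReal_nonneg
    · exact ENNReal.toReal_nonneg
    · exact ENNReal.toReal_mono hbne
        (measure_mono (inter_subset_inter_left _ inter_subset_right))
    · exact ENNReal.toReal_nonneg
    · exact ENNReal.toReal_mono hb'ne
        (measure_mono (inter_subset_inter_left _ inter_subset_right))
    · exact ENNReal.toReal_nonneg
    · exact ENNReal.toReal_mono hene (measure_mono inter_subset_right)
    · exact hrb'
    · rw [← hrm]; exact hmpos
    · rw [← hrm']; exact hm'pos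

end
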